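/- The following relations hold for all u1,v1,w1,e1,d ∈ F_q and λ,μ ∈ F_q^×: (i) β_{λ,μ}⁻¹ τ_d β_{λ,μ} = τ_{λμ⁻² d}; (ii) τ_d⁻¹ α_{(u1,v1,w1)} τ_d = γ_{2d·v1} α_{(u1 + d·v1² + d^ε·w1, v1, w1)}; (iii) τ_d⁻¹ γ_{e1} τ_d = γ_{e1}. -/

import Mathlib

open Equiv

/-! Context: `q = 3^r`, `K = F_q` a finite field with `3^r` elements, `Ω = K × K × K`,
`ε = 3^(r-1)` (so `q = 3ε`).  Permutations of `Ω` are composed left to right in the paper;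
in Lean, `(g * h) x = g (h x)`, so the paper's product `g·h` corresponds to `h * g` here,
and the paper's conjugate `g⁻¹ x g` corresponds to `g * x * g⁻¹`. -/

/-- The permutation `α_{(u,v,w)} : (a,b,c) ↦ (a+u, b+v, c+w)` of `Ω = K × K × K`. -/
def alphaPerm {K : Type*} [Field K] (u v w : K) : Equiv.Perm (K × K × K) where
  toFun x := (x.1 + u, x.2.1 + v, x.2.2 + w)
  invFun x := (x.1 - u, x.2.1 - v, x.2.2 - w)
  left_inv x := by simp
  right_inv x := by simp

/-- The permutation `β_{λ,μ} : (a,b,c) ↦ (λa, μb, (λμ)^{2ε} c)` of `Ω = K × K × K`. -/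
def betaPerm {K : Type*} [Field K] (ε : ℕ) (l m : Kˣ) : Equiv.Perm (K × K × K) where
  toFun x := ((l : K) * x.1, (m : K) * x.2.1, (((l * m) ^ (2 * ε) : Kˣ) : K) * x.2.2)
  invFun x := ((l⁻¹ : Kˣ) * x.1, (m⁻¹ : Kˣ) * x.2.1, ((((l * m) ^ (2 * ε))⁻¹ : Kˣ) : K) * x.2.2)
  left_inv x := by simp
  right_inv x := by simp

/-- The permutation `γ_e : (a,b,c) ↦ (a+eb, b, c)` of `Ω = K × K × K`. -/
def gammaPerm {K : Type*} [Field K] (e : K) : Equiv.Perm (K × K × K) where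
  toFun x := (x.1 + e * x.2.1, x.2.1, x.2.2)
  invFun x := (x.1 - e * x.2.1, x.2.1, x.2.2)
  left_inv x := by simp
  right_inv x := by simp

/-- The permutation `δ : (a,b,c) ↦ (b, -a, c)` of `Ω = K × K × K`. -/
def deltaPerm (K : Type*) [Field K] : Equiv.Perm (K × K × K) where
  toFun x := (x.2.1, -x.1, x.2.2)
  invFun x := (-x.2.1, x.1, x.2.2)
  left_inv x := by simp
  right_inv x := by simp

/-- The permutation `τ_d : (a,b,c) ↦ (a + d·b² + d^ε·c, b, c)` of `Ω = K × K × K`. -/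
def tauPerm {K : Type*} [Field K] (ε : ℕ) (d : K) : Equiv.Perm (K × K × K) where
  toFun x := (x.1 + d * x.2.1 ^ 2 + d ^ ε * x.2.2, x.2.1, x.2.2)
  invFun x := (x.1 - d * x.2.1 ^ 2 - d ^ ε * x.2.2, x.2.1, x.2.2)
  left_inv x := by obtain ⟨a, b, c⟩ := x; simp; ring
  right_inv x := by obtain ⟨a, b, c⟩ := x; simp; ring

/-- Lemma 2.6: relations involving `τ_d`.  The paper's conjugate `g⁻¹ x g` (composed left
to right) is `g * x * g⁻¹` in Lean, and the paper's product `γ·α` is `alphaPerm … * gammaPerm …`. -/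
theorem stmt7 (r : ℕ) (hr : 1 ≤ r) (K : Type*) [Field K] [Fintype K]
    (hcard : Fintype.card K = 3 ^ r) (ε : ℕ) (hε : ε = 3 ^ (r - 1))
    (u₁ v₁ w₁ e₁ d : K) (lam mu : Kˣ) :
    betaPerm ε lam mu * tauPerm ε d * (betaPerm ε lam mu)⁻¹
      = tauPerm ε (((lam * (mu ^ 2)⁻¹ : Kˣ) : K) * d)
    ∧ tauPerm ε d * alphaPerm u₁ v₁ w₁ * (tauPerm ε d)⁻¹
      = alphaPerm (u₁ + d * v₁ ^ 2 + d ^ ε * w₁) v₁ w₁ * gammaPerm (2 * d * v₁)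
    ∧ tauPerm ε d * gammaPerm e₁ * (tauPerm ε d)⁻¹ = gammaPerm e₁ := by
  have hq : ∀ x : K, x ^ (3 * ε) = x := by
    intro x
    have h3 : 3 * ε = 3 ^ r := by
      rw [hε, ← pow_succ']
      congr 1
      omega
    rw [h3, ← hcard, FiniteField.pow_card]
  refine ⟨?_, ?_, ?_⟩
  · ext ⟨a, b, c⟩ <;>
      simp [tauPerm, betaPerm, Equiv.Perm.mul_apply, Equiv.Perm.inv_def]
    have hl : (lam:K) ≠ 0 := lam.ne_zero
    have hm : (mu:K) ≠ 0 := mu.ne_zero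
    have h1 : (lam:K)^(3*ε) = lam := hq _
    field_simp
    have h2 : (mu:K) ^ (ε * 2) * (mu:K)⁻¹ ^ (ε * 2) = 1 := by
      rw [← mul_pow, mul_inv_cancel₀ hm, one_pow]
    linear_combination (-(mu:K) ^ 2 * d ^ ε * c) * h1 + (-(mu:K) ^ 2 * (lam:K) ^ (ε * 3) * d ^ ε * c) * h2
  · ext ⟨a, b, c⟩ <;>
      simp [tauPerm, alphaPerm, gammaPerm, Equiv.Perm.mul_apply, Equiv.Perm.inv_def]
    ring
  · ext ⟨a, b, c⟩ <;>
      simp [tauPerm, gammaPerm, Equiv.Perm.mul_apply, Equiv.Perm.inv_def]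
    ring
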